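/- Consider a partially input convex neural network (PICNN) with a fixed input x, so that the x-path values u_0 = x, u_{i+1} = g̃_i(W̃_i u_i + b̃_i) are fixed vectors, and the y-path is defined by z_{i+1} = g_i( W_i^{(z)}( z_i ∘ max(0, W_i^{(zu)} u_i + b_i^{(z)}) ) + W_i^{(y)}( y ∘ (W_i^{(yu)} u_i + b_i^{(y)}) ) + W_i^{(u)} u_i + b_i ) for i = 0, …, k−1 (with z_0 = 0 and W_0^{(z)} = 0), and f(x, y) = z_k. If every entry of each matrix W_i^{(z)} for i = 1, …, k−1 is nonnegative and every activation g_i : ℝ → ℝ (applied elementwise) is convex and nondecreasing, then y ↦ f(x, y) is a convex function on ℝ^p. -/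

import Mathlib

lemma myConvexOn_sum {ι α : Type*} [AddCommGroup α] [Module ℝ α]
    (t : Finset ι) (F : ι → α → ℝ) (h : ∀ i ∈ t, ConvexOn ℝ Set.univ (F i)) :
    ConvexOn ℝ Set.univ (fun y => ∑ i ∈ t, F i y) := by
  classical
  induction t using Finset.induction with
  | empty => simpa using convexOn_const 0 convex_univ
  | insert _ _ hnot ih =>
    rename_i a s
    simp only [Finset.sum_insert hnot]
    exact (h a (Finset.mem_insert_self a s)).add
      (ih fun i hi => h i (Finset.mem_insert_of_mem hi))

lemma myComp_conv {α : Type*} [AddCommGroup α] [Module ℝ α]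
    {f : α → ℝ} {g : ℝ → ℝ} (hg : ConvexOn ℝ Set.univ g) (hm : Monotone g)
    (hf : ConvexOn ℝ Set.univ f) : ConvexOn ℝ Set.univ (fun y => g (f y)) := by
  refine ⟨convex_univ, fun x _ y _ a b ha hb hab => ?_⟩
  calc g (f (a • x + b • y)) ≤ g (a * f x + b * f y) := by
        have := hf.2 (Set.mem_univ x) (Set.mem_univ y) ha hb hab
        simpa [smul_eq_mul] using hm this
    _ ≤ a * g (f x) + b * g (f y) := by
        simpa [smul_eq_mul] using hg.2 (Set.mem_univ (f x)) (Set.mem_univ (f y)) ha hb hab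

lemma myLinear_conv {p : ℕ} (c : Fin p → ℝ) (d : ℝ) :
    ConvexOn ℝ Set.univ (fun y : Fin p → ℝ => (∑ r, c r * y r) + d) := by
  refine ⟨convex_univ, fun x _ y _ a b ha hb hab => ?_⟩
  simp only [Pi.add_apply, Pi.smul_apply, smul_eq_mul]
  have : (∑ r, c r * (a * x r + b * y r)) + d
      = a * ((∑ r, c r * x r) + d) + b * ((∑ r, c r * y r) + d) := by
    rw [Finset.sum_congr rfl (fun r _ => by ring : ∀ r ∈ Finset.univ,
      c r * (a * x r + b * y r) = a * (c r * x r) + b * (c r * y r))]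
    rw [Finset.sum_add_distrib, ← Finset.mul_sum, ← Finset.mul_sum]
    linear_combination (-d) * hab
  exact le_of_eq this


/-- A partially input convex neural network (PICNN) with a fixed input `x`
(so the `x`-path values `u₀ = x`, `u_{i+1} = g̃ᵢ(W̃ᵢ uᵢ + b̃ᵢ)` are fixed vectors) and `y`-path
`z_{i+1} = gᵢ( Wᵢ⁽ᶻ⁾(zᵢ ∘ max(0, Wᵢ⁽ᶻᵘ⁾ uᵢ + bᵢ⁽ᶻ⁾)) + Wᵢ⁽ʸ⁾(y ∘ (Wᵢ⁽ʸᵘ⁾ uᵢ + bᵢ⁽ʸ⁾))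
+ Wᵢ⁽ᵘ⁾ uᵢ + bᵢ )` (with `z₀ = 0`), output `f(x,y) = z_k`, is convex in `y` provided all
`Wᵢ⁽ᶻ⁾` (for `1 ≤ i ≤ k-1`) have nonnegative entries and all `gᵢ` are convex and
nondecreasing. -/
theorem picnn_convex_in_y
    (k p : ℕ) (hk : 1 ≤ k)
    (d e : ℕ → ℕ) (hdk : d k = 1)
    (x : Fin (e 0) → ℝ)
    (Wtil : (i : ℕ) → Matrix (Fin (e (i + 1))) (Fin (e i)) ℝ)
    (btil : (i : ℕ) → Fin (e (i + 1)) → ℝ)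
    (gtil : ℕ → ℝ → ℝ)
    (Wz : (i : ℕ) → Matrix (Fin (d (i + 1))) (Fin (d i)) ℝ)
    (Wzu : (i : ℕ) → Matrix (Fin (d i)) (Fin (e i)) ℝ)
    (bz : (i : ℕ) → Fin (d i) → ℝ)
    (Wy : (i : ℕ) → Matrix (Fin (d (i + 1))) (Fin p) ℝ)
    (Wyu : (i : ℕ) → Matrix (Fin p) (Fin (e i)) ℝ)
    (by' : (i : ℕ) → Fin p → ℝ)
    (Wu : (i : ℕ) → Matrix (Fin (d (i + 1))) (Fin (e i)) ℝ)
    (b : (i : ℕ) → Fin (d (i + 1)) → ℝ)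
    (g : ℕ → ℝ → ℝ)
    (hW : ∀ i, 1 ≤ i → i < k → ∀ r c, 0 ≤ Wz i r c)
    (hgconv : ∀ i, i < k → ConvexOn ℝ Set.univ (g i))
    (hgmono : ∀ i, i < k → Monotone (g i))
    (u : (i : ℕ) → Fin (e i) → ℝ)
    (hu0 : u 0 = x)
    (hurec : ∀ i, u (i + 1) = fun j => gtil i ((Wtil i).mulVec (u i) j + btil i j))
    (z : (i : ℕ) → (Fin p → ℝ) → Fin (d i) → ℝ)
    (hz0 : ∀ y, z 0 y = 0)
    (hzrec : ∀ i y, z (i + 1) y = fun j =>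
      g i ((Wz i).mulVec (fun r => z i y r * max 0 ((Wzu i).mulVec (u i) r + bz i r)) j
        + (Wy i).mulVec (fun r => y r * ((Wyu i).mulVec (u i) r + by' i r)) j
        + (Wu i).mulVec (u i) j + b i j))
    (f : (Fin p → ℝ) → ℝ)
    (hf : ∀ y, f y = z k y ⟨0, by omega⟩) :
    ConvexOn ℝ Set.univ f := by
  have key : ∀ i, i ≤ k → ∀ j, ConvexOn ℝ Set.univ (fun y => z i y j) := by
    intro i
    induction i with
    | zero =>
      intro _ j
      simp only [hz0, Pi.zero_apply]
      exact convexOn_const 0 convex_univ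
    | succ i ih =>
      intro hik j
      have hik' : i < k := hik
      have heq : (fun y => z (i + 1) y j) = fun y =>
          g i ((Wz i).mulVec (fun r => z i y r * max 0 ((Wzu i).mulVec (u i) r + bz i r)) j
            + (Wy i).mulVec (fun r => y r * ((Wyu i).mulVec (u i) r + by' i r)) j
            + (Wu i).mulVec (u i) j + b i j) := by
        funext y; rw [hzrec i y]
      rw [heq]
      apply myComp_conv (hgconv i hik') (hgmono i hik')
      have hA : ConvexOn ℝ Set.univ (fun y =>
          (Wz i).mulVec (fun r => z i y r * max 0 ((Wzu i).mulVec (u i) r + bz i r)) j) := by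
        rcases Nat.eq_zero_or_pos i with h0 | hpos
        · subst h0
          simp only [hz0, Pi.zero_apply, zero_mul, Matrix.mulVec, dotProduct,
            mul_zero, Finset.sum_const_zero]
          exact convexOn_const 0 convex_univ
        · simp only [Matrix.mulVec, dotProduct]
          apply myConvexOn_sum
          intro r _
          have hc : 0 ≤ Wz i j r * max 0 ((Wzu i).mulVec (u i) r + bz i r) :=
            mul_nonneg (hW i hpos hik' j r) (le_max_left 0 _)
          have h1 := (ih (le_of_lt hik') r).smul hc
          convert h1 using 1
          · rfl
          · rfl
          · rfl
          · rfl
          funext y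
          simp only [smul_eq_mul, Matrix.mulVec, dotProduct]
          ring
      have hB : ConvexOn ℝ Set.univ (fun y : Fin p → ℝ =>
          (Wy i).mulVec (fun r => y r * ((Wyu i).mulVec (u i) r + by' i r)) j
            + ((Wu i).mulVec (u i) j + b i j)) := by
        have heq3 : (fun y : Fin p → ℝ =>
            (Wy i).mulVec (fun r => y r * ((Wyu i).mulVec (u i) r + by' i r)) j
              + ((Wu i).mulVec (u i) j + b i j))
            = fun y => (∑ r, (Wy i j r * ((Wyu i).mulVec (u i) r + by' i r)) * y r)
              + ((Wu i).mulVec (u i) j + b i j) := by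
          funext y
          simp only [Matrix.mulVec, dotProduct]
          congr 1
          exact Finset.sum_congr rfl fun r _ => by ring
        rw [heq3]
        exact myLinear_conv _ _
      have := hA.add hB
      have heq4 : (fun y : Fin p → ℝ =>
          (Wz i).mulVec (fun r => z i y r * max 0 ((Wzu i).mulVec (u i) r + bz i r)) j
            + (Wy i).mulVec (fun r => y r * ((Wyu i).mulVec (u i) r + by' i r)) j
            + (Wu i).mulVec (u i) j + b i j)
          = fun y =>
          (Wz i).mulVec (fun r => z i y r * max 0 ((Wzu i).mulVec (u i) r + bz i r)) j
            + ((Wy i).mulVec (fun r => y r * ((Wyu i).mulVec (u i) r + by' i r)) j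
            + ((Wu i).mulVec (u i) j + b i j)) := by
        funext y; ring
      rw [heq4]
      exact this
  have hfeq : f = fun y => z k y ⟨0, by omega⟩ := funext hf
  rw [hfeq]
  exact key k le_rfl _
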